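/- (Combinatorial core of the O(n + m^{3/2}) butterfly complexity bound under (bR)^{2/3} rank growth.) There exists a constant C > 0 such that for every natural number L, Σ_{ℓ=0}^{L} 4^ℓ · Σ_{k=1}^{4^{L−ℓ}} min( (16:ℝ)^ℓ, (k:ℝ)^{2/3} ) ≤ C · 4^{(3/2)·L}. -/

import Mathlib

open Finset

private lemma mul_min_eq (c a b : ℝ) (hc : 0 ≤ c) : c * min a b = min (c * a) (c * b) := by
  rcases le_total a b with h | h
  · rw [min_eq_left h, min_eq_left (mul_le_mul_of_nonneg_left h hc)]
  · rw [min_eq_right h, min_eq_right (mul_le_mul_of_nonneg_left h hc)]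

theorem stmt17 :
    ∃ C : ℝ, 0 < C ∧
      ∀ L : ℕ,
        ∑ ℓ ∈ Finset.range (L + 1),
            (4 : ℝ) ^ ℓ *
              ∑ k ∈ Finset.Icc (1 : ℕ) (4 ^ (L - ℓ)),
                min ((16 : ℝ) ^ ℓ) ((k : ℝ) ^ ((2 : ℝ) / 3)) ≤
          C * (4 : ℝ) ^ ((3 / 2 : ℝ) * (L : ℝ)) := by
  refine ⟨10, by norm_num, fun L => ?_⟩
  set w : ℝ := (4 : ℝ) ^ ((1 : ℝ) / 6) with hw
  have hw0 : 0 < w := Real.rpow_pos_of_pos (by norm_num) _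
  have hw1 : 1 < w := by
    rw [hw]
    exact (Real.one_lt_rpow_iff_of_pos (by norm_num)).2 (Or.inl ⟨by norm_num, by norm_num⟩)
  have hwn : ∀ n : ℕ, w ^ n = (4 : ℝ) ^ ((n : ℝ) / 6) := by
    intro n
    rw [hw, ← Real.rpow_natCast ((4 : ℝ) ^ ((1 : ℝ) / 6)) n,
      ← Real.rpow_mul (by norm_num : (0:ℝ) ≤ 4)]
    congr 1
    ring
  have h4 : ∀ n : ℕ, (4 : ℝ) ^ n = w ^ (6 * n) := by
    intro n
    rw [hwn, ← Real.rpow_natCast 4 n]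
    congr 1
    push_cast; ring
  have hw4 : (2 : ℝ) ≤ w ^ 4 := by
    rw [hwn]
    have h2 : (2 : ℝ) = (4 : ℝ) ^ ((1 : ℝ) / 2) := by
      rw [show (4 : ℝ) = 2 ^ (2 : ℕ) by norm_num, ← Real.rpow_natCast 2 2,
        ← Real.rpow_mul (by norm_num : (0:ℝ) ≤ 2)]
      norm_num
    rw [h2]
    exact (Real.rpow_le_rpow_left_iff (by norm_num : (1:ℝ) < 4)).2 (by norm_num)
  -- per-ℓ bound
  have key : ∀ ℓ ∈ Finset.range (L + 1),
      (4 : ℝ) ^ ℓ *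
          ∑ k ∈ Finset.Icc (1 : ℕ) (4 ^ (L - ℓ)),
            min ((16 : ℝ) ^ ℓ) ((k : ℝ) ^ ((2 : ℝ) / 3)) ≤
        min (w ^ (8 * L + 4 * ℓ)) (w ^ (10 * L - 4 * ℓ)) := by
    intro ℓ hℓ
    have hℓL : ℓ ≤ L := Nat.lt_succ_iff.1 (Finset.mem_range.1 hℓ)
    set m := L - ℓ with hm
    -- pointwise bound
    have hpt : ∀ k ∈ Finset.Icc (1 : ℕ) (4 ^ m),
        min ((16 : ℝ) ^ ℓ) ((k : ℝ) ^ ((2 : ℝ) / 3)) ≤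
          min (w ^ (6 * ℓ + 2 * m)) (w ^ (4 * m)) := by
      intro k hk
      obtain ⟨hk1, hkN⟩ := Finset.mem_Icc.1 hk
      have hkpos : (0 : ℝ) < (k : ℝ) := by exact_mod_cast hk1
      have hkN' : (k : ℝ) ≤ (4 : ℝ) ^ m := by
        calc (k : ℝ) ≤ ((4 ^ m : ℕ) : ℝ) := by exact_mod_cast hkN
        _ = (4 : ℝ) ^ m := by push_cast; ring
      have e13 : ((4 : ℝ) ^ m) ^ ((1 : ℝ) / 3) = w ^ (2 * m) := by
        rw [hwn, ← Real.rpow_natCast 4 m, ← Real.rpow_mul (by norm_num : (0:ℝ) ≤ 4)]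
        congr 1
        push_cast; ring
      have e23 : ((4 : ℝ) ^ m) ^ ((2 : ℝ) / 3) = w ^ (4 * m) := by
        rw [hwn, ← Real.rpow_natCast 4 m, ← Real.rpow_mul (by norm_num : (0:ℝ) ≤ 4)]
        congr 1
        push_cast; ring
      refine le_min ?_ ?_
      · -- min ≤ 4^ℓ * k^{1/3} ≤ w^{6ℓ+2m}
        have step1 : min ((16 : ℝ) ^ ℓ) ((k : ℝ) ^ ((2 : ℝ) / 3)) ≤
            (4 : ℝ) ^ ℓ * (k : ℝ) ^ ((1 : ℝ) / 3) := by
          have e16 : (16 : ℝ) ^ ℓ = (4 : ℝ) ^ ℓ * (4 : ℝ) ^ ℓ := by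
            rw [← mul_pow]; norm_num
          have ek : (k : ℝ) ^ ((2 : ℝ) / 3) =
              (k : ℝ) ^ ((1 : ℝ) / 3) * (k : ℝ) ^ ((1 : ℝ) / 3) := by
            rw [← Real.rpow_add hkpos]; norm_num
          rcases le_total ((4 : ℝ) ^ ℓ) ((k : ℝ) ^ ((1 : ℝ) / 3)) with h | h
          · refine (min_le_left _ _).trans ?_
            rw [e16]
            exact mul_le_mul_of_nonneg_left h (by positivity)
          · refine (min_le_right _ _).trans ?_
            rw [ek]
            exact mul_le_mul_of_nonneg_right h (Real.rpow_nonneg hkpos.le _)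
        have step2 : (k : ℝ) ^ ((1 : ℝ) / 3) ≤ w ^ (2 * m) := by
          rw [← e13]
          exact Real.rpow_le_rpow hkpos.le hkN' (by norm_num)
        calc min ((16 : ℝ) ^ ℓ) ((k : ℝ) ^ ((2 : ℝ) / 3))
            ≤ (4 : ℝ) ^ ℓ * (k : ℝ) ^ ((1 : ℝ) / 3) := step1
          _ ≤ (4 : ℝ) ^ ℓ * w ^ (2 * m) :=
              mul_le_mul_of_nonneg_left step2 (by positivity)
          _ = w ^ (6 * ℓ + 2 * m) := by rw [h4, pow_add]
      · -- min ≤ k^{2/3} ≤ w^{4m}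
        refine (min_le_right _ _).trans ?_
        rw [← e23]
        exact Real.rpow_le_rpow hkpos.le hkN' (by norm_num)
    -- sum over k
    have hsum : ∑ k ∈ Finset.Icc (1 : ℕ) (4 ^ m),
        min ((16 : ℝ) ^ ℓ) ((k : ℝ) ^ ((2 : ℝ) / 3)) ≤
        ((4 : ℕ) ^ m : ℝ) * min (w ^ (6 * ℓ + 2 * m)) (w ^ (4 * m)) := by
      have := Finset.sum_le_card_nsmul (Finset.Icc (1 : ℕ) (4 ^ m)) _ _ hpt
      rw [Nat.card_Icc, nsmul_eq_mul, Nat.add_sub_cancel] at this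
      exact_mod_cast this
    have hc : (0 : ℝ) ≤ (4 : ℝ) ^ ℓ := by positivity
    calc (4 : ℝ) ^ ℓ * ∑ k ∈ Finset.Icc (1 : ℕ) (4 ^ m),
            min ((16 : ℝ) ^ ℓ) ((k : ℝ) ^ ((2 : ℝ) / 3))
        ≤ (4 : ℝ) ^ ℓ * (((4 : ℕ) ^ m : ℝ) * min (w ^ (6 * ℓ + 2 * m)) (w ^ (4 * m))) :=
          mul_le_mul_of_nonneg_left hsum hc
      _ = min (w ^ (8 * L + 4 * ℓ)) (w ^ (10 * L - 4 * ℓ)) := by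
          push_cast
          rw [h4 ℓ, h4 m, ← mul_assoc, ← pow_add,
            mul_min_eq _ _ _ (by positivity), ← pow_add, ← pow_add]
          have e1 : 6 * ℓ + 6 * m + (6 * ℓ + 2 * m) = 8 * L + 4 * ℓ := by omega
          have e2 : 6 * ℓ + 6 * m + 4 * m = 10 * L - 4 * ℓ := by omega
          rw [e1, e2]
  -- outer sum
  have houter : ∑ ℓ ∈ Finset.range (L + 1),
      min (w ^ (8 * L + 4 * ℓ)) (w ^ (10 * L - 4 * ℓ)) ≤ 4 * w ^ (9 * L) := by
    set q := L / 4 with hq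
    rw [← Finset.sum_filter_add_sum_filter_not (Finset.range (L + 1)) (fun ℓ => 4 * ℓ ≤ L)]
    have hf1 : (Finset.range (L + 1)).filter (fun ℓ => 4 * ℓ ≤ L) = Finset.range (q + 1) := by
      ext x
      simp only [Finset.mem_filter, Finset.mem_range, Nat.lt_succ_iff]
      omega
    have hf2 : (Finset.range (L + 1)).filter (fun ℓ => ¬ 4 * ℓ ≤ L) =
        Finset.Ico (q + 1) (L + 1) := by
      ext x
      simp only [Finset.mem_filter, Finset.mem_range, Finset.mem_Ico, Nat.lt_succ_iff]
      omega
    rw [hf1, hf2]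
    have hS1 : ∑ ℓ ∈ Finset.range (q + 1),
        min (w ^ (8 * L + 4 * ℓ)) (w ^ (10 * L - 4 * ℓ)) ≤ 2 * w ^ (9 * L) := by
      have hterm : ∀ ℓ ∈ Finset.range (q + 1),
          min (w ^ (8 * L + 4 * ℓ)) (w ^ (10 * L - 4 * ℓ)) ≤
            w ^ (9 * L) * (1 / 2 : ℝ) ^ (q - ℓ) := by
        intro ℓ hℓ
        have hℓq : ℓ ≤ q := Nat.lt_succ_iff.1 (Finset.mem_range.1 hℓ)
        refine (min_le_left _ _).trans ?_
        have h1 : w ^ (8 * L + 4 * ℓ) * ((2:ℝ) ^ (q - ℓ)) ≤ w ^ (9 * L) := by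
          have h2q : (2:ℝ) ^ (q - ℓ) ≤ w ^ (4 * (q - ℓ)) := by
            calc (2:ℝ) ^ (q - ℓ) ≤ (w ^ 4) ^ (q - ℓ) :=
                  pow_le_pow_left₀ (by norm_num) hw4 _
              _ = w ^ (4 * (q - ℓ)) := by rw [← pow_mul]
          calc w ^ (8 * L + 4 * ℓ) * ((2:ℝ) ^ (q - ℓ))
              ≤ w ^ (8 * L + 4 * ℓ) * w ^ (4 * (q - ℓ)) :=
                mul_le_mul_of_nonneg_left h2q (by positivity)
            _ = w ^ (8 * L + 4 * ℓ + 4 * (q - ℓ)) := by rw [← pow_add]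
            _ ≤ w ^ (9 * L) := pow_le_pow_right₀ hw1.le (by omega)
        have h2pos : (0:ℝ) < (2:ℝ) ^ (q - ℓ) := by positivity
        calc w ^ (8 * L + 4 * ℓ) ≤ w ^ (9 * L) / (2:ℝ) ^ (q - ℓ) := by
              rw [le_div_iff₀ h2pos]; exact h1
          _ = w ^ (9 * L) * ((1:ℝ) / 2 ^ (q - ℓ)) := by ring
          _ = w ^ (9 * L) * ((1 / 2 : ℝ) ^ (q - ℓ)) := by rw [div_pow, one_pow]
      calc ∑ ℓ ∈ Finset.range (q + 1),
            min (w ^ (8 * L + 4 * ℓ)) (w ^ (10 * L - 4 * ℓ))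
          ≤ ∑ ℓ ∈ Finset.range (q + 1), w ^ (9 * L) * (1 / 2 : ℝ) ^ (q - ℓ) :=
            Finset.sum_le_sum hterm
        _ = w ^ (9 * L) * ∑ ℓ ∈ Finset.range (q + 1), (1 / 2 : ℝ) ^ (q - ℓ) := by
            rw [Finset.mul_sum]
        _ = w ^ (9 * L) * ∑ j ∈ Finset.range (q + 1), (1 / 2 : ℝ) ^ j := by
            congr 1
            have := Finset.sum_range_reflect (fun j => (1 / 2 : ℝ) ^ j) (q + 1)
            rw [← this]
            exact Finset.sum_congr rfl fun x hx => by norm_num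
        _ ≤ w ^ (9 * L) * 2 :=
            mul_le_mul_of_nonneg_left (sum_geometric_two_le _) (by positivity)
        _ = 2 * w ^ (9 * L) := by ring
    have hS2 : ∑ ℓ ∈ Finset.Ico (q + 1) (L + 1),
        min (w ^ (8 * L + 4 * ℓ)) (w ^ (10 * L - 4 * ℓ)) ≤ 2 * w ^ (9 * L) := by
      have hterm : ∀ ℓ ∈ Finset.Ico (q + 1) (L + 1),
          min (w ^ (8 * L + 4 * ℓ)) (w ^ (10 * L - 4 * ℓ)) ≤
            w ^ (9 * L) * (1 / 2 : ℝ) ^ (ℓ - (q + 1)) := by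
        intro ℓ hℓ
        obtain ⟨hℓ1, hℓ2⟩ := Finset.mem_Ico.1 hℓ
        have hℓL : ℓ ≤ L := Nat.lt_succ_iff.1 hℓ2
        refine (min_le_right _ _).trans ?_
        have h1 : w ^ (10 * L - 4 * ℓ) * ((2:ℝ) ^ (ℓ - (q + 1))) ≤ w ^ (9 * L) := by
          have h2q : (2:ℝ) ^ (ℓ - (q + 1)) ≤ w ^ (4 * (ℓ - (q + 1))) := by
            calc (2:ℝ) ^ (ℓ - (q + 1)) ≤ (w ^ 4) ^ (ℓ - (q + 1)) :=
                  pow_le_pow_left₀ (by norm_num) hw4 _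
              _ = w ^ (4 * (ℓ - (q + 1))) := by rw [← pow_mul]
          calc w ^ (10 * L - 4 * ℓ) * ((2:ℝ) ^ (ℓ - (q + 1)))
              ≤ w ^ (10 * L - 4 * ℓ) * w ^ (4 * (ℓ - (q + 1))) :=
                mul_le_mul_of_nonneg_left h2q (by positivity)
            _ = w ^ (10 * L - 4 * ℓ + 4 * (ℓ - (q + 1))) := by rw [← pow_add]
            _ ≤ w ^ (9 * L) := pow_le_pow_right₀ hw1.le (by omega)
        have h2pos : (0:ℝ) < (2:ℝ) ^ (ℓ - (q + 1)) := by positivity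
        calc w ^ (10 * L - 4 * ℓ) ≤ w ^ (9 * L) / (2:ℝ) ^ (ℓ - (q + 1)) := by
              rw [le_div_iff₀ h2pos]; exact h1
          _ = w ^ (9 * L) * ((1:ℝ) / 2 ^ (ℓ - (q + 1))) := by ring
          _ = w ^ (9 * L) * ((1 / 2 : ℝ) ^ (ℓ - (q + 1))) := by rw [div_pow, one_pow]
      calc ∑ ℓ ∈ Finset.Ico (q + 1) (L + 1),
            min (w ^ (8 * L + 4 * ℓ)) (w ^ (10 * L - 4 * ℓ))
          ≤ ∑ ℓ ∈ Finset.Ico (q + 1) (L + 1),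
              w ^ (9 * L) * (1 / 2 : ℝ) ^ (ℓ - (q + 1)) := Finset.sum_le_sum hterm
        _ = ∑ i ∈ Finset.range (L + 1 - (q + 1)),
              w ^ (9 * L) * (1 / 2 : ℝ) ^ i := by
            rw [Finset.sum_Ico_eq_sum_range]
            apply Finset.sum_congr rfl
            intro x hx
            congr 2
            omega
        _ = w ^ (9 * L) * ∑ i ∈ Finset.range (L + 1 - (q + 1)), (1 / 2 : ℝ) ^ i := by
            rw [Finset.mul_sum]
        _ ≤ w ^ (9 * L) * 2 :=
            mul_le_mul_of_nonneg_left (sum_geometric_two_le _) (by positivity)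
        _ = 2 * w ^ (9 * L) := by ring
    linarith
  have hfinal : w ^ (9 * L) = (4 : ℝ) ^ ((3 / 2 : ℝ) * (L : ℝ)) := by
    rw [hwn]
    congr 1
    push_cast; ring
  calc ∑ ℓ ∈ Finset.range (L + 1),
        (4 : ℝ) ^ ℓ * ∑ k ∈ Finset.Icc (1 : ℕ) (4 ^ (L - ℓ)),
          min ((16 : ℝ) ^ ℓ) ((k : ℝ) ^ ((2 : ℝ) / 3))
      ≤ ∑ ℓ ∈ Finset.range (L + 1),
          min (w ^ (8 * L + 4 * ℓ)) (w ^ (10 * L - 4 * ℓ)) := Finset.sum_le_sum key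
    _ ≤ 4 * w ^ (9 * L) := houter
    _ ≤ 10 * w ^ (9 * L) := by nlinarith [pow_pos hw0 (9 * L)]
    _ = 10 * (4 : ℝ) ^ ((3 / 2 : ℝ) * (L : ℝ)) := by rw [hfinal]
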